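/- Let π, π̃ ∈ (0,1), μ, μ̃ > 0, and σ, σ̃ > 0 with (μ, σ) ≠ (0, 1) and (μ̃, σ̃) ≠ (0, 1). If π φ(z; 0, 1) + (1−π) φ(z; μ, σ²) = π̃ φ(z; 0, 1) + (1−π̃) φ(z; μ̃, σ̃²) for almost all z ∈ ℝ, then π = π̃, μ = μ̃, and σ = σ̃. -/

import Mathlib

open MeasureTheory

/-- Normal density with mean `m` and standard deviation `s`. -/
noncomputable def normalPDF (m s z : ℝ) : ℝ :=
  (1 / (s * Real.sqrt (2 * Real.pi))) * Real.exp (-((z - m) ^ 2) / (2 * s ^ 2))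

open Filter Real

section Helpers

lemma expQuad_atBot_zero {a b : ℝ} (ha : a ≤ 0) (hb : 0 < b) :
    Tendsto (fun z : ℝ => Real.exp (a*z^2 + b*z)) atBot (nhds 0) := by
  apply squeeze_zero' (Eventually.of_forall fun z => (Real.exp_pos _).le)
    (Eventually.of_forall fun z => Real.exp_le_exp.2
      (show a*z^2+b*z ≤ b*z by nlinarith [sq_nonneg z]))
  exact Real.tendsto_exp_atBot.comp (tendsto_const_mul_atBot_of_pos hb |>.2 tendsto_id)

lemma expQuad_atBot_top {a b : ℝ} (ha : 0 < a) :
    Tendsto (fun z : ℝ => Real.exp (a*z^2 + b*z)) atBot atTop := by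
  apply tendsto_atTop_mono' atBot _ (Real.tendsto_exp_atTop.comp tendsto_neg_atBot_atTop)
  filter_upwards [eventually_le_atBot (min 0 (-(b+1)/a))] with z hz
  have hz0 : z ≤ 0 := le_trans hz (min_le_left _ _)
  have hz1 : z ≤ -(b+1)/a := le_trans hz (min_le_right _ _)
  have h2 : z * a ≤ -(b+1) := (le_div_iff₀ ha).1 hz1
  have h3 : (0:ℝ) ≤ (-z) * (-(a*z+b+1)) :=
    mul_nonneg (neg_nonneg.2 hz0) (neg_nonneg.2 (by nlinarith))
  exact Real.exp_le_exp.2 (show -z ≤ a*z^2+b*z by nlinarith)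

lemma expQuad_atTop_zero {a b : ℝ} (h : a < 0 ∨ (a = 0 ∧ b < 0)) :
    Tendsto (fun z : ℝ => Real.exp (a*z^2 + b*z)) atTop (nhds 0) := by
  rcases h with ha | ⟨ha, hb⟩
  · apply squeeze_zero' (Eventually.of_forall fun z => (Real.exp_pos _).le) _
      (Real.tendsto_exp_atBot.comp tendsto_neg_atTop_atBot)
    filter_upwards [eventually_ge_atTop (max 0 ((b+1)/(-a)))] with z hz
    have hz0 : 0 ≤ z := le_trans (le_max_left _ _) hz
    have hz1 : (b+1)/(-a) ≤ z := le_trans (le_max_right _ _) hz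
    have h2 : b+1 ≤ z * (-a) := (div_le_iff₀ (by linarith)).1 hz1
    exact Real.exp_le_exp.2 (show a*z^2+b*z ≤ -z by nlinarith)
  · subst ha
    apply squeeze_zero' (Eventually.of_forall fun z => (Real.exp_pos _).le)
      (Eventually.of_forall fun z => Real.exp_le_exp.2 (show 0*z^2+b*z ≤ b*z by nlinarith))
    exact Real.tendsto_exp_atBot.comp ((tendsto_const_mul_atBot_of_neg hb).2 tendsto_id)

lemma expQuad_atTop_top {a b : ℝ} (h : 0 < a ∨ (a = 0 ∧ 0 < b)) :
    Tendsto (fun z : ℝ => Real.exp (a*z^2 + b*z)) atTop atTop := by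
  rcases h with ha | ⟨ha, hb⟩
  · apply tendsto_atTop_mono' atTop _ (Real.tendsto_exp_atTop.comp tendsto_id)
    filter_upwards [eventually_ge_atTop (max 0 ((1-b)/a))] with z hz
    have hz0 : 0 ≤ z := le_trans (le_max_left _ _) hz
    have hz1 : (1-b)/a ≤ z := le_trans (le_max_right _ _) hz
    have h2 : 1-b ≤ z * a := (div_le_iff₀ ha).1 hz1
    exact Real.exp_le_exp.2 (show id z ≤ a*z^2+b*z by simp only [id]; nlinarith)
  · subst ha
    apply tendsto_atTop_mono' atTop
      (Eventually.of_forall fun z => Real.exp_le_exp.2 (show b*z ≤ 0*z^2+b*z by nlinarith))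
    exact Real.tendsto_exp_atTop.comp (tendsto_const_mul_atTop_of_pos hb |>.2 tendsto_id)

lemma keylemma {k c c' α β α' β' : ℝ} (hc : 0 < c) (hc' : 0 < c')
    (hβ : 0 < β) (hβ' : 0 < β')
    (h : ∀ z : ℝ, k + c * Real.exp (α*z^2 + β*z) = c' * Real.exp (α'*z^2 + β'*z)) :
    α = α' ∧ β = β' ∧ c = c' ∧ k = 0 := by
  have hab : α = α' ∧ β = β' := by
    by_contra hne
    rcases le_or_gt α 0 with hα | hα <;> rcases le_or_gt α' 0 with hα' | hα'
    · -- both ≤ 0 : k = 0, then c = c', exponents equal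
      have t1 : Tendsto (fun z : ℝ => (k + c * Real.exp (α*z^2 + β*z))
          - c' * Real.exp (α'*z^2 + β'*z)) atBot (nhds (k + c*0 - c'*0)) :=
        ((((expQuad_atBot_zero hα hβ).const_mul c).const_add k).sub
          ((expQuad_atBot_zero hα' hβ').const_mul c'))
      have t2 : (fun z : ℝ => (k + c * Real.exp (α*z^2 + β*z))
          - c' * Real.exp (α'*z^2 + β'*z)) = fun _ => (0:ℝ) :=
        funext fun z => by rw [h z]; ring
      rw [t2] at t1
      have hk : k + c*0 - c'*0 = 0 := tendsto_nhds_unique t1 tendsto_const_nhds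
      have hk0 : k = 0 := by linarith
      have h0 := h 0
      simp [hk0] at h0
      have hcc : c = c' := h0
      have hq : ∀ z : ℝ, α*z^2 + β*z = α'*z^2 + β'*z := by
        intro z
        have := h z
        rw [hk0, hcc, zero_add] at this
        exact Real.exp_injective (mul_left_cancel₀ hc'.ne' this)
      have e1 := hq 1
      have e2 := hq (-1)
      norm_num at e1 e2
      exact hne ⟨by linarith, by linarith⟩
    · -- α ≤ 0, α' > 0
      have t1 : Tendsto (fun z : ℝ => k + c * Real.exp (α*z^2 + β*z)) atBot
          (nhds (k + c*0)) := ((expQuad_atBot_zero hα hβ).const_mul c).const_add k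
      have t2 : (fun z : ℝ => k + c * Real.exp (α*z^2 + β*z))
          = fun z => c' * Real.exp (α'*z^2 + β'*z) := funext h
      rw [t2] at t1
      exact not_tendsto_atTop_of_tendsto_nhds t1
        ((expQuad_atBot_top hα').const_mul_atTop hc')
    · -- α > 0, α' ≤ 0
      have t1 : Tendsto (fun z : ℝ => c' * Real.exp (α'*z^2 + β'*z)) atBot
          (nhds (c'*0)) := (expQuad_atBot_zero hα' hβ').const_mul c'
      have t2 : (fun z : ℝ => c' * Real.exp (α'*z^2 + β'*z))
          = fun z => k + c * Real.exp (α*z^2 + β*z) := funext fun z => (h z).symm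
      rw [t2] at t1
      exact not_tendsto_atTop_of_tendsto_nhds t1
        (tendsto_atTop_add_const_left atBot k ((expQuad_atBot_top hα).const_mul_atTop hc))
    · -- both > 0
      have hQ : ∀ z : ℝ, c * Real.exp ((α-α')*z^2 + (β-β')*z)
          = c' - k * Real.exp ((-α')*z^2 + (-β')*z) := by
        intro z
        have e1 : (α-α')*z^2 + (β-β')*z = (α*z^2 + β*z) - (α'*z^2 + β'*z) := by ring
        have e2 : (-α')*z^2 + (-β')*z = -(α'*z^2 + β'*z) := by ring
        rw [e1, e2, Real.exp_sub, Real.exp_neg]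
        have hz := h z
        have hE' := Real.exp_pos (α'*z^2 + β'*z)
        field_simp
        have hz2 := h z
        ring_nf at hz2 ⊢
        linarith [hz2]
      have hE' : Tendsto (fun z : ℝ => Real.exp ((-α')*z^2 + (-β')*z)) atTop (nhds 0) :=
        expQuad_atTop_zero (Or.inl (by linarith))
      have t1 : Tendsto (fun z : ℝ => c * Real.exp ((α-α')*z^2 + (β-β')*z)) atTop
          (nhds (c' - k*0)) := by
        rw [funext hQ]
        exact tendsto_const_nhds.sub (hE'.const_mul k)
      rcases lt_trichotomy α α' with hlt | heqa | hgt
      · have t0 : Tendsto (fun z : ℝ => c * Real.exp ((α-α')*z^2 + (β-β')*z)) atTop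
            (nhds (c*0)) := (expQuad_atTop_zero (Or.inl (by linarith))).const_mul c
        have := tendsto_nhds_unique t1 t0
        simp at this
        rcases this with h1 | h1 <;> linarith
      · have hbb : β ≠ β' := fun hb => hne ⟨heqa, hb⟩
        rcases hbb.lt_or_gt with hblt | hbgt
        · have t0 : Tendsto (fun z : ℝ => c * Real.exp ((α-α')*z^2 + (β-β')*z)) atTop
              (nhds (c*0)) :=
            (expQuad_atTop_zero (Or.inr ⟨by linarith, by linarith⟩)).const_mul c
          have := tendsto_nhds_unique t1 t0
          simp at this
          rcases this with h1 | h1 <;> linarith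
        · exact not_tendsto_atTop_of_tendsto_nhds t1
            ((expQuad_atTop_top (Or.inr ⟨by linarith, by linarith⟩)).const_mul_atTop hc)
      · exact not_tendsto_atTop_of_tendsto_nhds t1
          ((expQuad_atTop_top (Or.inl (by linarith))).const_mul_atTop hc)
  obtain ⟨ha, hb⟩ := hab
  subst ha; subst hb
  have h0 := h 0
  norm_num at h0
  have h1 := h 1
  have h2 := h (-1)
  norm_num at h1 h2
  by_cases hcc : c = c'
  · exact ⟨rfl, rfl, hcc, by linarith⟩
  · exfalso
    have e1 : (c' - c) * Real.exp (α + β) = (c' - c) * 1 := by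
      rw [mul_one]; linarith [h1]
    have e2 : (c' - c) * Real.exp (α + -β) = (c' - c) * 1 := by
      rw [mul_one]; linarith [h2]
    have hne0 : c' - c ≠ 0 := fun hh => hcc (by linarith)
    have g1 := (Real.exp_eq_one_iff _).1 (mul_left_cancel₀ hne0 e1)
    have g2 := (Real.exp_eq_one_iff _).1 (mul_left_cancel₀ hne0 e2)
    linarith

noncomputable def Cc (m s : ℝ) : ℝ :=
  (1 / (s * Real.sqrt (2 * Real.pi))) * Real.exp (-(m^2) / (2 * s^2))

lemma Cc_pos {m s : ℝ} (hs : 0 < s) : 0 < Cc m s := by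
  unfold Cc
  have h2π : 0 < 2 * Real.pi := by positivity
  positivity

lemma normalPDF_mul {m s : ℝ} (hs : 0 < s) (z : ℝ) :
    normalPDF m s z * Real.exp (z^2/2)
      = Cc m s * Real.exp ((1/2 - 1/(2*s^2))*z^2 + (m/s^2)*z) := by
  unfold normalPDF Cc
  rw [mul_assoc, ← Real.exp_add, mul_assoc, ← Real.exp_add]
  congr 1
  field_simp
  ring

lemma normalPDF_mul01 (z : ℝ) : normalPDF 0 1 z * Real.exp (z^2/2) = Cc 0 1 := by
  rw [normalPDF_mul one_pos z]
  norm_num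

lemma normalPDF_cont (m s : ℝ) : Continuous (fun z => normalPDF m s z) := by
  unfold normalPDF
  fun_prop

end Helpers

theorem stmt19 (p p' μ μ' σ σ' : ℝ)
    (hp : p ∈ Set.Ioo (0 : ℝ) 1) (hp' : p' ∈ Set.Ioo (0 : ℝ) 1)
    (hμ : 0 < μ) (hμ' : 0 < μ') (hσ : 0 < σ) (hσ' : 0 < σ')
    (hne : (μ, σ) ≠ ((0 : ℝ), (1 : ℝ))) (hne' : (μ', σ') ≠ ((0 : ℝ), (1 : ℝ)))
    (heq : ∀ᵐ z ∂(volume : Measure ℝ),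
      p * normalPDF 0 1 z + (1 - p) * normalPDF μ σ z
        = p' * normalPDF 0 1 z + (1 - p') * normalPDF μ' σ' z) :
    p = p' ∧ μ = μ' ∧ σ = σ' := by
  obtain ⟨hp0, hp1⟩ := hp
  obtain ⟨hp0', hp1'⟩ := hp'
  -- upgrade to pointwise equality
  have cont1 : Continuous (fun z => p * normalPDF 0 1 z + (1 - p) * normalPDF μ σ z) :=
    (continuous_const.mul (normalPDF_cont 0 1)).add (continuous_const.mul (normalPDF_cont μ σ))
  have cont2 : Continuous (fun z => p' * normalPDF 0 1 z + (1 - p') * normalPDF μ' σ' z) :=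
    (continuous_const.mul (normalPDF_cont 0 1)).add (continuous_const.mul (normalPDF_cont μ' σ'))
  have hpt : ∀ z : ℝ, p * normalPDF 0 1 z + (1 - p) * normalPDF μ σ z
      = p' * normalPDF 0 1 z + (1 - p') * normalPDF μ' σ' z := by
    have := (Continuous.ae_eq_iff_eq (volume : Measure ℝ) cont1 cont2).1 heq
    exact fun z => congrFun this z
  -- exponential form
  have key : ∀ z : ℝ, (p - p') * Cc 0 1
      + ((1-p) * Cc μ σ) * Real.exp ((1/2 - 1/(2*σ^2))*z^2 + (μ/σ^2)*z)
      = ((1-p') * Cc μ' σ') * Real.exp ((1/2 - 1/(2*σ'^2))*z^2 + (μ'/σ'^2)*z) := by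
    intro z
    have e := hpt z
    have h0 := normalPDF_mul01 z
    have h1 := normalPDF_mul (m := μ) hσ z
    have h2 := normalPDF_mul (m := μ') hσ' z
    linear_combination Real.exp (z^2/2) * e - (p - p') * h0 - (1-p) * h1 + (1-p') * h2
  have hc : 0 < (1-p) * Cc μ σ := mul_pos (by linarith) (Cc_pos hσ)
  have hc' : 0 < (1-p') * Cc μ' σ' := mul_pos (by linarith) (Cc_pos hσ')
  have hβ : 0 < μ/σ^2 := by positivity
  have hβ' : 0 < μ'/σ'^2 := by positivity
  obtain ⟨hα, hβeq, hceq, hk⟩ := keylemma hc hc' hβ hβ' key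
  -- extract σ = σ'
  have hσσ : σ = σ' := by
    have hs2 : σ^2 = σ'^2 := by
      field_simp at hα
      linarith
    nlinarith
  have hμμ : μ = μ' := by
    rw [hσσ] at hβeq
    have hs : (0:ℝ) < σ'^2 := by positivity
    field_simp at hβeq
    exact hβeq
  have hpp : p = p' := by
    have hCpos : 0 < Cc 0 1 := Cc_pos one_pos
    have : p - p' = 0 := by
      rcases mul_eq_zero.1 hk with h | h
      · exact h
      · exact absurd h hCpos.ne'
    linarith
  exact ⟨hpp, hμμ, hσσ⟩
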